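/- Let μ > 0, α₀ > 0 with μα₀ < 2, c₀ > 0, δ ∈ (0, 1/2), and let α_k = α₀/(k+1), c_k = c₀/(k+1)^δ. Let G, B, D, E ≥ 0 and let (u_k) be a nonnegative real sequence such that for all k ≥ K (with K ≥ 1): u_{k+1} ≤ (1 − μα_k/2) u_k + (2α_k/μ) G + (α_k²/c_k²) B + D α_k c_k + E α_k² c_k². Then for all k ≥ K, u_{k+1} ≤ u_K + 4G/μ² + B α₀²/(c₀²(1 − 2δ)) + D α₀ c₀/δ + E α₀² c₀²/(1 + 2δ). -/

import Mathlib

set_option maxHeartbeats 1000000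

/-- Core algebraic inequality: `x^q (x+1+q) ≤ (x+1)^(q+1)` for `q > 0`, `x ≥ 1`. -/
lemma bdd_rec_core (q x : ℝ) (hq : 0 < q) (hx : 1 ≤ x) :
    x ^ q * (x + 1 + q) ≤ (x + 1) ^ (q + 1) := by
  have hx0 : (0:ℝ) < x := lt_of_lt_of_le one_pos hx
  have hx1 : (0:ℝ) < x + 1 := by linarith
  have hA : (0:ℝ) < x ^ q := Real.rpow_pos_of_pos hx0 q
  have hB : (0:ℝ) < (x + 1) ^ q := Real.rpow_pos_of_pos hx1 q
  have hsum : (x + 1) ^ (q + 1) = (x + 1) ^ q * (x + 1) := by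
    rw [Real.rpow_add hx1, Real.rpow_one]
  rw [hsum]
  rcases le_total q 1 with h1 | h1
  · -- q ≤ 1 : Bernoulli upper bound with s = -(1/(x+1))
    have hs : (-1:ℝ) ≤ -(1 / (x + 1)) := by
      rw [neg_le_neg_iff, div_le_one hx1]; linarith
    have hb := rpow_one_add_le_one_add_mul_self hs hq.le h1
    have he : (1:ℝ) + -(1 / (x + 1)) = x / (x + 1) := by field_simp; ring
    rw [he, Real.div_rpow hx0.le hx1.le] at hb
    rw [div_le_iff₀ hB] at hb
    have hexp : (1 + q * -(1 / (x + 1))) * ((x + 1) ^ q) * (x + 1)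
        = (x + 1) ^ q * (x + 1 - q) := by field_simp; ring
    have hb2 : x ^ q * (x + 1) ≤ (x + 1) ^ q * (x + 1 - q) := by
      calc x ^ q * (x + 1) ≤ (1 + q * -(1 / (x + 1))) * ((x + 1) ^ q) * (x + 1) := by
            nlinarith [hb]
        _ = (x + 1) ^ q * (x + 1 - q) := hexp
    nlinarith [mul_le_mul_of_nonneg_right hb2 (by linarith : (0:ℝ) ≤ x + 1 + q), sq_nonneg q, hB]
  · -- q ≥ 1 : Bernoulli lower bound with s = 1/x
    have hs : (-1:ℝ) ≤ 1 / x := by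
      have : (0:ℝ) ≤ 1 / x := by positivity
      linarith
    have hb := one_add_mul_self_le_rpow_one_add hs h1
    have he : (1:ℝ) + 1 / x = (x + 1) / x := by field_simp
    rw [he, Real.div_rpow hx1.le hx0.le] at hb
    rw [le_div_iff₀ hA] at hb
    have hb2 : x ^ q * (x + q) ≤ (x + 1) ^ q * x := by
      have h3 := mul_le_mul_of_nonneg_right hb hx0.le
      calc x ^ q * (x + q) = (1 + q * (1 / x)) * x ^ q * x := by field_simp
        _ ≤ (x + 1) ^ q * x := h3
    nlinarith [mul_le_mul_of_nonneg_right hb2 (by linarith : (0:ℝ) ≤ x + 1), hA, hB, hq]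

/-- Key per-term telescoping inequality. -/
lemma bdd_rec_key (q x : ℝ) (hq : 0 < q) (hx : 1 ≤ x) :
    q * (x + 1) ^ (-(q + 1)) ≤ x ^ (-q) - (x + 1) ^ (-q) := by
  have hx0 : (0:ℝ) < x := lt_of_lt_of_le one_pos hx
  have hx1 : (0:ℝ) < x + 1 := by linarith
  have hA : (0:ℝ) < x ^ q := Real.rpow_pos_of_pos hx0 q
  have hB : (0:ℝ) < (x + 1) ^ q := Real.rpow_pos_of_pos hx1 q
  have hsum : (x + 1) ^ (q + 1) = (x + 1) ^ q * (x + 1) := by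
    rw [Real.rpow_add hx1, Real.rpow_one]
  have hcore := bdd_rec_core q x hq hx
  rw [hsum] at hcore
  rw [Real.rpow_neg hx0.le, Real.rpow_neg hx1.le, Real.rpow_neg hx1.le, hsum]
  rw [show q * ((x + 1) ^ q * (x + 1))⁻¹ = q / ((x + 1) ^ q * (x + 1)) by ring,
    show (x ^ q)⁻¹ - ((x + 1) ^ q)⁻¹ = ((x + 1) ^ q - x ^ q) / (x ^ q * (x + 1) ^ q) by
      field_simp,
    div_le_div_iff₀ (by positivity) (by positivity)]
  nlinarith [mul_le_mul_of_nonneg_left hcore hB.le]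

/-- Telescoping sum bound. -/
lemma bdd_rec_sum (q : ℝ) (hq : 0 < q) (K : ℕ) (hK : 1 ≤ K) :
    ∀ k, K ≤ k → ∑ j ∈ Finset.Icc K k, ((j:ℝ) + 1) ^ (-(q + 1)) ≤ 1 / q := by
  have main : ∀ k, K ≤ k →
      q * ∑ j ∈ Finset.Icc K k, ((j:ℝ) + 1) ^ (-(q + 1))
        ≤ (K:ℝ) ^ (-q) - ((k:ℝ) + 1) ^ (-q) := by
    intro k hk
    induction k, hk using Nat.le_induction with
    | base =>
      rw [Finset.Icc_self, Finset.sum_singleton]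
      exact bdd_rec_key q K hq (by exact_mod_cast hK)
    | succ k hk ih =>
      rw [Finset.sum_Icc_succ_top (by omega : K ≤ k + 1), mul_add]
      have hk1 : (1:ℝ) ≤ (k:ℝ) + 1 := by
        have : (1:ℝ) ≤ (k:ℝ) := by exact_mod_cast hK.trans hk
        linarith
      have hkey := bdd_rec_key q ((k:ℝ) + 1) hq hk1
      push_cast
      push_cast at ih hkey
      linarith
  intro k hk
  have h1 : (K:ℝ) ^ (-q) ≤ 1 :=
    Real.rpow_le_one_of_one_le_of_nonpos (by exact_mod_cast hK) (by linarith)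
  have h2 : (0:ℝ) ≤ ((k:ℝ) + 1) ^ (-q) := Real.rpow_nonneg (by positivity) _
  rw [le_div_iff₀ hq]
  calc (∑ j ∈ Finset.Icc K k, ((j:ℝ) + 1) ^ (-(q + 1))) * q
      = q * ∑ j ∈ Finset.Icc K k, ((j:ℝ) + 1) ^ (-(q + 1)) := by ring
    _ ≤ (K:ℝ) ^ (-q) - ((k:ℝ) + 1) ^ (-q) := main k hk
    _ ≤ 1 := by linarith

/-- The deterministic recursion underlying Proposition 1 (mean square boundedness):
a nonnegative sequence contracted by `1 - μ α_k / 2` with the listed forcing terms,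
where `α_k = α₀/(k+1)` and `c_k = c₀/(k+1)^δ`, is uniformly bounded by the stated
explicit constant. -/
theorem boundedness_recursion
    (μ α₀ c₀ δ : ℝ) (hμ : 0 < μ) (hα₀ : 0 < α₀) (hμα : μ * α₀ < 2) (hc₀ : 0 < c₀)
    (hδ : δ ∈ Set.Ioo (0 : ℝ) (1/2))
    (α c : ℕ → ℝ)
    (hα : ∀ k, α k = α₀ / ((k : ℝ) + 1))
    (hc : ∀ k, c k = c₀ / ((k : ℝ) + 1) ^ δ)
    (G B D E : ℝ) (hG : 0 ≤ G) (hB : 0 ≤ B) (hD : 0 ≤ D) (hE : 0 ≤ E)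
    (u : ℕ → ℝ) (hu : ∀ k, 0 ≤ u k)
    (K : ℕ) (hK : 1 ≤ K)
    (hrec : ∀ k, K ≤ k → u (k + 1) ≤ (1 - μ * α k / 2) * u k
      + (2 * α k / μ) * G + (α k ^ 2 / c k ^ 2) * B + D * α k * c k + E * α k ^ 2 * c k ^ 2) :
    ∀ k, K ≤ k → u (k + 1) ≤ u K + 4 * G / μ ^ 2
      + B * α₀ ^ 2 / (c₀ ^ 2 * (1 - 2 * δ)) + D * α₀ * c₀ / δ
      + E * α₀ ^ 2 * c₀ ^ 2 / (1 + 2 * δ) := by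
  obtain ⟨hδ0, hδ1⟩ := hδ
  have hδ1' : 2 * δ < 1 := by linarith
  set F : ℕ → ℝ := fun j => (α j ^ 2 / c j ^ 2) * B + D * α j * c j + E * α j ^ 2 * c j ^ 2
    with hF
  have hxpos : ∀ j : ℕ, (0:ℝ) < (j:ℝ) + 1 := fun j => by positivity
  have hαpos : ∀ j, 0 < α j := fun j => by rw [hα]; positivity
  have hcpos : ∀ j, 0 < c j := fun j => by
    rw [hc]; exact div_pos hc₀ (Real.rpow_pos_of_pos (hxpos j) δ)
  have hFpos : ∀ j, 0 ≤ F j := fun j => by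
    have h1 := hαpos j; have h2 := hcpos j
    simp only [hF]
    positivity
  have hθ : ∀ j : ℕ, 0 ≤ μ * α j / 2 ∧ μ * α j / 2 ≤ 1 := by
    intro j
    refine ⟨by have := hαpos j; positivity, ?_⟩
    rw [hα]
    have h1 : μ * (α₀ / ((j:ℝ) + 1)) ≤ μ * α₀ := by
      apply mul_le_mul_of_nonneg_left _ hμ.le
      rw [div_le_iff₀ (hxpos j)]
      nlinarith [(Nat.cast_nonneg j : (0:ℝ) ≤ j)]
    linarith
  -- Step 1: partial-sum bound by induction
  have step1 : ∀ k, K ≤ k → u (k + 1) ≤ (u K + 4 * G / μ ^ 2) + ∑ j ∈ Finset.Icc K k, F j := by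
    have hGterm : ∀ j, (2 * α j / μ) * G = (μ * α j / 2) * (4 * G / μ ^ 2) := by
      intro j; field_simp; ring
    intro k hk
    induction k, hk using Nat.le_induction with
    | base =>
      have h := hrec K le_rfl
      rw [hGterm K] at h
      obtain ⟨ht0, ht1⟩ := hθ K
      rw [Finset.Icc_self, Finset.sum_singleton]
      have hM : (0:ℝ) ≤ 4 * G / μ ^ 2 := by positivity
      simp only [hF]
      nlinarith [hu K, h]
    | succ k hk ih =>
      have h := hrec (k + 1) (by omega)
      rw [hGterm (k + 1)] at h
      obtain ⟨ht0, ht1⟩ := hθ (k + 1)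
      rw [Finset.sum_Icc_succ_top (by omega : K ≤ k + 1)]
      have hM : (0:ℝ) ≤ 4 * G / μ ^ 2 := by positivity
      have hT : (0:ℝ) ≤ ∑ j ∈ Finset.Icc K k, F j := Finset.sum_nonneg fun j _ => hFpos j
      have huK := hu K
      have hFk : F (k + 1) = (α (k+1) ^ 2 / c (k+1) ^ 2) * B + D * α (k+1) * c (k+1)
          + E * α (k+1) ^ 2 * c (k+1) ^ 2 := rfl
      nlinarith [h, ih, mul_le_mul_of_nonneg_left ih ht0]
  -- Step 2: rewrite F j in rpow form
  have hFj : ∀ j : ℕ, F j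
      = B * (α₀ ^ 2 / c₀ ^ 2) * ((j:ℝ) + 1) ^ (-((1 - 2*δ) + 1))
      + (D * α₀ * c₀) * ((j:ℝ) + 1) ^ (-(δ + 1))
      + (E * α₀ ^ 2 * c₀ ^ 2) * ((j:ℝ) + 1) ^ (-((1 + 2*δ) + 1)) := by
    intro j
    have hx := hxpos j
    set x : ℝ := (j:ℝ) + 1 with hxdef
    have hxδ : (0:ℝ) < x ^ δ := Real.rpow_pos_of_pos hx δ
    have e1 : x ^ (-((1 - 2*δ) + 1)) = (x ^ δ) ^ 2 / x ^ 2 := by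
      rw [← Real.rpow_natCast (x ^ δ) 2, ← Real.rpow_natCast x 2,
        ← Real.rpow_mul hx.le, ← Real.rpow_sub hx]
      norm_num
      ring_nf
    have e2 : x ^ (-(δ + 1)) = 1 / (x ^ δ * x) := by
      rw [Real.rpow_neg hx.le, Real.rpow_add hx, Real.rpow_one, one_div]
    have e3 : x ^ (-((1 + 2*δ) + 1)) = 1 / ((x ^ δ) ^ 2 * x ^ 2) := by
      rw [← Real.rpow_natCast (x ^ δ) 2, ← Real.rpow_natCast x 2,
        ← Real.rpow_mul hx.le, ← Real.rpow_add hx, Real.rpow_neg hx.le, one_div]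
      norm_num
      ring_nf
    simp only [hF, hα j, hc j, ← hxdef]
    rw [e1, e2, e3]
    field_simp
  intro k hk
  have h1 := step1 k hk
  have hrw : ∑ j ∈ Finset.Icc K k, F j
      = B * (α₀ ^ 2 / c₀ ^ 2) * (∑ j ∈ Finset.Icc K k, ((j:ℝ) + 1) ^ (-((1 - 2*δ) + 1)))
      + (D * α₀ * c₀) * (∑ j ∈ Finset.Icc K k, ((j:ℝ) + 1) ^ (-(δ + 1)))
      + (E * α₀ ^ 2 * c₀ ^ 2) * (∑ j ∈ Finset.Icc K k, ((j:ℝ) + 1) ^ (-((1 + 2*δ) + 1))) := by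
    rw [Finset.mul_sum, Finset.mul_sum, Finset.mul_sum, ← Finset.sum_add_distrib,
      ← Finset.sum_add_distrib]
    exact Finset.sum_congr rfl fun j _ => hFj j
  have hsum1 := bdd_rec_sum (1 - 2*δ) (by linarith) K hK k hk
  have hsum2 := bdd_rec_sum δ hδ0 K hK k hk
  have hsum3 := bdd_rec_sum (1 + 2*δ) (by linarith) K hK k hk
  have c1 : (0:ℝ) ≤ B * (α₀ ^ 2 / c₀ ^ 2) := by positivity
  have c2 : (0:ℝ) ≤ D * α₀ * c₀ := by positivity
  have c3 : (0:ℝ) ≤ E * α₀ ^ 2 * c₀ ^ 2 := by positivity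
  have h2 : ∑ j ∈ Finset.Icc K k, F j
      ≤ B * (α₀ ^ 2 / c₀ ^ 2) * (1 / (1 - 2*δ)) + (D * α₀ * c₀) * (1 / δ)
        + (E * α₀ ^ 2 * c₀ ^ 2) * (1 / (1 + 2*δ)) := by
    rw [hrw]
    exact add_le_add (add_le_add (mul_le_mul_of_nonneg_left hsum1 c1)
      (mul_le_mul_of_nonneg_left hsum2 c2)) (mul_le_mul_of_nonneg_left hsum3 c3)
  have heq : B * (α₀ ^ 2 / c₀ ^ 2) * (1 / (1 - 2*δ)) + (D * α₀ * c₀) * (1 / δ)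
        + (E * α₀ ^ 2 * c₀ ^ 2) * (1 / (1 + 2*δ))
      = B * α₀ ^ 2 / (c₀ ^ 2 * (1 - 2 * δ)) + D * α₀ * c₀ / δ
        + E * α₀ ^ 2 * c₀ ^ 2 / (1 + 2 * δ) := by
    have hne1 : (1:ℝ) - 2*δ ≠ 0 := by linarith
    have hne2 : δ ≠ 0 := hδ0.ne'
    have hne3 : (1:ℝ) + 2*δ ≠ 0 := by linarith
    field_simp
  linarith [h2, heq ▸ h2]
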